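/- Let u be a real number. Then the function x ↦ |Γ(u + ix)|² is strictly decreasing on (0, ∞), where Γ denotes the complex Gamma function. -/

import Mathlib

open Finset Filter Topology

/-- The squared modulus of the Gamma approximating sequence at `u + t i`. -/
lemma abs_gammaSeq_sq (u t : ℝ) (n : ℕ) (hn : 1 ≤ n) :
    ‖Complex.GammaSeq ((u : ℂ) + t * Complex.I) n‖ ^ 2 =
      ((n : ℝ) ^ u * n.factorial) ^ 2 /
        ∏ j ∈ Finset.range (n + 1), ((u + j) ^ 2 + t ^ 2) := by
  have hnp : (0 : ℝ) < (n : ℝ) := by exact_mod_cast Nat.pos_of_ne_zero (by omega)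
  have h1 : ‖((n : ℕ) : ℂ) ^ ((u : ℂ) + t * Complex.I)‖ = (n : ℝ) ^ u := by
    rw [show ((n : ℕ) : ℂ) = (((n : ℝ) : ℂ)) by push_cast; ring,
      Complex.norm_cpow_eq_rpow_re_of_pos hnp]
    congr 1
    simp
  have h2 : ‖((n.factorial : ℕ) : ℂ)‖ = (n.factorial : ℝ) := by
    simp
  have h3 : ‖∏ j ∈ Finset.range (n + 1), (((u : ℂ) + t * Complex.I) + j)‖ ^ 2 =
      ∏ j ∈ Finset.range (n + 1), ((u + j) ^ 2 + t ^ 2) := by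
    rw [Complex.norm_prod, ← Finset.prod_pow]
    refine Finset.prod_congr rfl fun j _ => ?_
    rw [Complex.sq_norm, Complex.normSq_apply]
    simp [Complex.add_re, Complex.add_im, Complex.mul_re, Complex.mul_im]
    ring
  rw [Complex.GammaSeq, norm_div, norm_mul, h1, h2, div_pow, h3, mul_pow]

/-- For any real `u`, the function `x ↦ |Γ(u + ix)|²` is strictly decreasing on `(0, ∞)`. -/
theorem abs_gamma_sq_strictAntiOn (u : ℝ) :
    StrictAntiOn (fun x : ℝ => ‖Complex.Gamma ((u : ℂ) + x * Complex.I)‖ ^ 2)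
      (Set.Ioi 0) := by
  intro x hx y hy hxy
  simp only [Set.mem_Ioi] at hx hy
  set z : ℂ := (u : ℂ) + x * Complex.I with hz
  set w : ℂ := (u : ℂ) + y * Complex.I with hw
  have hux : (0 : ℝ) < u ^ 2 + x ^ 2 := by positivity
  set r : ℝ := (u ^ 2 + y ^ 2) / (u ^ 2 + x ^ 2) with hrdef
  have hr : 1 < r := (one_lt_div hux).2 (by nlinarith)
  -- the Gamma value at w is nonzero
  have hΓw : Complex.Gamma w ≠ 0 := by
    refine Complex.Gamma_ne_zero fun m => ?_
    intro h
    have : w.im = 0 := by rw [h]; simp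
    simp [hw, Complex.add_im, Complex.mul_im] at this
    linarith
  have hwpos : 0 < ‖Complex.Gamma w‖ ^ 2 := by
    have := norm_pos_iff.mpr hΓw
    positivity
  -- limits
  have hlz : Tendsto (fun n => ‖Complex.GammaSeq z n‖ ^ 2) atTop
      (𝓝 (‖Complex.Gamma z‖ ^ 2)) :=
    (((continuous_norm.tendsto _).comp (Complex.GammaSeq_tendsto_Gamma z)).pow 2)
  have hlw : Tendsto (fun n => r * ‖Complex.GammaSeq w n‖ ^ 2) atTop
      (𝓝 (r * ‖Complex.Gamma w‖ ^ 2)) :=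
    (((continuous_norm.tendsto _).comp (Complex.GammaSeq_tendsto_Gamma w)).pow 2).const_mul r
  -- pointwise comparison for n ≥ 1
  have key : ∀ n : ℕ, 1 ≤ n →
      r * ‖Complex.GammaSeq w n‖ ^ 2 ≤ ‖Complex.GammaSeq z n‖ ^ 2 := by
    intro n hn
    rw [abs_gammaSeq_sq u x n hn, abs_gammaSeq_sq u y n hn]
    set K : ℝ := ((n : ℝ) ^ u * n.factorial) ^ 2 with hK
    have hKpos : 0 ≤ K := by positivity
    have hPx : (0 : ℝ) < ∏ j ∈ Finset.range (n + 1), ((u + j) ^ 2 + x ^ 2) :=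
      Finset.prod_pos fun j _ => by positivity
    have hPy : (0 : ℝ) < ∏ j ∈ Finset.range (n + 1), ((u + j) ^ 2 + y ^ 2) :=
      Finset.prod_pos fun j _ => by positivity
    rw [mul_div_assoc' r K _, div_le_div_iff₀ hPy hPx]
    -- reduces to : r * K * Px ≤ K * Py
    have hprod : (u ^ 2 + y ^ 2) * ∏ j ∈ Finset.range (n + 1), ((u + j) ^ 2 + x ^ 2) ≤
        (u ^ 2 + x ^ 2) * ∏ j ∈ Finset.range (n + 1), ((u + j) ^ 2 + y ^ 2) := by
      rw [Finset.prod_range_succ' (fun j => (u + j) ^ 2 + x ^ 2),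
        Finset.prod_range_succ' (fun j => (u + j) ^ 2 + y ^ 2)]
      simp only [Nat.cast_zero, add_zero]
      have hmul : ∏ k ∈ Finset.range n, ((u + ((k + 1 : ℕ) : ℝ)) ^ 2 + x ^ 2) ≤
          ∏ k ∈ Finset.range n, ((u + ((k + 1 : ℕ) : ℝ)) ^ 2 + y ^ 2) :=
        Finset.prod_le_prod (fun j _ => by positivity) (fun j _ => by nlinarith)
      have hPx' : (0 : ℝ) < ∏ k ∈ Finset.range n, ((u + ((k + 1 : ℕ) : ℝ)) ^ 2 + x ^ 2) :=
        Finset.prod_pos fun j _ => by positivity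
      have hC : (0 : ℝ) ≤ (u ^ 2 + x ^ 2) * (u ^ 2 + y ^ 2) := by positivity
      nlinarith [mul_le_mul_of_nonneg_left hmul hC]
    have h2 := mul_le_mul_of_nonneg_left hprod hKpos
    rw [hrdef, div_mul_eq_mul_div, div_mul_eq_mul_div, div_le_iff₀ hux]
    nlinarith [h2]
  have hle : r * ‖Complex.Gamma w‖ ^ 2 ≤ ‖Complex.Gamma z‖ ^ 2 :=
    le_of_tendsto_of_tendsto hlw hlz (eventually_atTop.2 ⟨1, key⟩)
  calc ‖Complex.Gamma w‖ ^ 2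
      < r * ‖Complex.Gamma w‖ ^ 2 := by nlinarith
    _ ≤ ‖Complex.Gamma z‖ ^ 2 := hle
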